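/- Solvability threshold of the Gaussian over-fitting polynomial system, one extra component (Proposition 4.2(i)): For m = 2, the system S_{2,3} admits a nontrivial real solution (for example c₁ = c₂ = 1, a₁ = 1, a₂ = −1, b₁ = b₂ = −1/2), while the system S_{2,4} admits no nontrivial real solution. Equivalently, the smallest r ≥ 1 for which S_{2,r} has no nontrivial real solution is r̄(2) = 4. -/

import Mathlib

noncomputable section

/-- The system `S_{m,r}` of `r` polynomial equations in the unknowns
`(c_j, a_j, b_j)_{j=1}^m`: for each `α ∈ {1,…,r}`,
`∑_j ∑_{n₁+2n₂=α} c_j² a_j^{n₁} b_j^{n₂}/(n₁! n₂!) = 0`. -/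
def SsysEq (m r : ℕ) (c a b : Fin m → ℝ) : Prop :=
  ∀ α : ℕ, 1 ≤ α → α ≤ r →
    ∑ j : Fin m, ∑ n ∈ Finset.filter (fun n : ℕ × ℕ => n.1 + 2 * n.2 = α)
        (Finset.range (α + 1) ×ˢ Finset.range (α + 1)),
      c j ^ 2 * a j ^ n.1 * b j ^ n.2 / (n.1.factorial * n.2.factorial : ℝ) = 0

/-- The system `S_{m,r}` admits a nontrivial real solution: all `c_j ≠ 0`
and at least one `a_j ≠ 0`. -/
def NontrivSol (m r : ℕ) : Prop :=
  ∃ c a b : Fin m → ℝ, SsysEq m r c a b ∧ (∀ j, c j ≠ 0) ∧ (∃ j, a j ≠ 0)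

/-- `S_{2,4}` has no nontrivial solution. -/
lemma no_nontriv_four : ¬ NontrivSol 2 4 := by
  rintro ⟨c, a, b, hs, hc, ha⟩
  have h1 := hs 1 (by norm_num) (by norm_num)
  have h2 := hs 2 (by norm_num) (by norm_num)
  have h3 := hs 3 (by norm_num) (by norm_num)
  have h4 := hs 4 (by norm_num) (by norm_num)
  simp [Fin.sum_univ_two, Finset.sum_filter, Finset.sum_product, Finset.sum_range_succ,
    Nat.factorial] at h1 h2 h3 h4
  have hc0 := hc 0
  have hc1 := hc 1
  have hx : (0:ℝ) < c 0 ^ 2 := by positivity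
  have hy : (0:ℝ) < c 1 ^ 2 := by positivity
  set x := c 0 ^ 2 with hxd
  set y := c 1 ^ 2 with hyd
  have hA : a 0 ≠ 0 := by
    intro h0
    obtain ⟨j, hj⟩ := ha
    have h1' : a 1 = 0 := by
      rw [h0] at h1
      simp at h1
      rcases h1 with h | h
      · exact absurd h hy.ne'
      · exact h
    fin_cases j <;> simp_all
  have ha1 : a 1 = -(x * a 0) / y := by
    field_simp
    linarith [h1]
  rw [ha1] at h2 h3 h4
  have hyne : y ≠ 0 := hy.ne'
  have hxy : (0:ℝ) < x + y := by linarith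
  field_simp at h2 h3 h4
  have H2' : 2*x*y*(b 0) + 2*y^2*(b 1) + x*y*(a 0)^2 + x^2*(a 0)^2 = 0 := by
    have H2 : y * (2*x*y*(b 0) + 2*y^2*(b 1) + x*y*(a 0)^2 + x^2*(a 0)^2) = 0 := by
      linear_combination y * h2
    exact (mul_eq_zero.mp H2).resolve_left hyne
  have H3' : 6*y^2*(b 0) - 6*y^2*(b 1) + y^2*(a 0)^2 - x^2*(a 0)^2 = 0 := by
    have H3 : (x * a 0 * y^2) * (6*y^2*(b 0) - 6*y^2*(b 1) + y^2*(a 0)^2 - x^2*(a 0)^2) = 0 := by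
      linear_combination y^2 * h3
    refine (mul_eq_zero.mp H3).resolve_left ?_
    positivity
  have h6 : 6*y*(b 0) + (a 0)^2*(2*x+y) = 0 := by
    have key0 : (y*(x+y)) * (6*y*(b 0) + (a 0)^2*(2*x+y)) = 0 := by
      linear_combination 3*y*H2' + y*H3'
    exact (mul_eq_zero.mp key0).resolve_left (by positivity)
  have h7 : 6*y^2*(b 1) + (a 0)^2*x*(x+2*y) = 0 := by
    have key1 : (x+y) * (6*y^2*(b 1) + (a 0)^2*x*(x+2*y)) = 0 := by
      linear_combination 3*y*H2' - x*H3'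
    exact (mul_eq_zero.mp key1).resolve_left hxy.ne'
  have hb0 : b 0 = -((a 0)^2*(2*x+y))/(6*y) := by
    field_simp; linarith
  have hb1 : b 1 = -((a 0)^2*x*(x+2*y))/(6*y^2) := by
    field_simp; linarith
  rw [hb0, hb1] at h4
  field_simp at h4
  have hkey : y^12 * ((a 0)^4 * x * (x^3 + 2*x^2*y + 2*x*y^2 + y^3)) = 0 := by
    linear_combination (-y^12/48 : ℝ) * h4
  have hpos : 0 < y^12 * ((a 0)^4 * x * (x^3 + 2*x^2*y + 2*x*y^2 + y^3)) := by
    positivity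
  linarith

lemma sol_three : SsysEq 2 3 ![1, 1] ![1, -1] ![-(1 / 2), -(1 / 2)] := by
  intro α hα1 hα3
  interval_cases α <;>
    norm_num [Fin.sum_univ_two, Finset.sum_filter, Finset.sum_product,
      Finset.sum_range_succ, Nat.factorial]

/-- **Proposition 4.2(i)**: for one extra component (`m = 2`), the system `S_{2,3}`
has the nontrivial solution `c₁ = c₂ = 1, a₁ = 1, a₂ = −1, b₁ = b₂ = −1/2`, while
`S_{2,4}` has no nontrivial real solution; the solvability threshold is `r̄(2) = 4`. -/
theorem gaussian_system_threshold_one_extra :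
    SsysEq 2 3 ![1, 1] ![1, -1] ![-(1 / 2), -(1 / 2)] ∧
    NontrivSol 2 3 ∧ ¬ NontrivSol 2 4 ∧
    IsLeast {r : ℕ | 1 ≤ r ∧ ¬ NontrivSol 2 r} 4 := by
  have hnt : ∀ r : ℕ, r ≤ 3 → NontrivSol 2 r := by
    intro r hr
    refine ⟨![1, 1], ![1, -1], ![-(1 / 2), -(1 / 2)],
      fun α hα1 hαr => sol_three α hα1 (hαr.trans hr), ?_, ⟨0, by norm_num⟩⟩
    intro j; fin_cases j <;> norm_num
  refine ⟨sol_three, hnt 3 le_rfl, no_nontriv_four, ⟨by norm_num, no_nontriv_four⟩, ?_⟩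
  intro r hr
  by_contra hlt
  push_neg at hlt
  exact hr.2 (hnt r (by omega))
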